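/- Let a > b > 0 and let x₀ ∈ [a+b/2, 2a−b/2]. Let D₁ be the uniform probability measure on [−2a,−a] ∪ [a,2a] and let D₂ be the uniform probability measure on [−x₀−b/2, −x₀+b/2] ∪ [x₀−b/2, x₀+b/2] (i.e., (1/(2b)) times Lebesgue measure restricted to this set). Then W₁(D₁, D₂) ≤ (3/2)a − (1/2)b, where W₁(μ,ν) denotes the infimum, over all probability measures γ on ℝ × ℝ whose first marginal is μ and second marginal is ν, of ∫ |x−y| dγ(x,y). -/

import Mathlib

open MeasureTheory

/-- A coupling of `(μ, ν)`: a probability measure on the product whose first marginal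
is `μ` and whose second marginal is `ν`. -/
def IsCoupling (γ : Measure (ℝ × ℝ)) (μ ν : Measure ℝ) : Prop :=
  IsProbabilityMeasure γ ∧ γ.map Prod.fst = μ ∧ γ.map Prod.snd = ν

/-- Wasserstein-1 distance on ℝ: the infimum over all couplings `γ` of `(μ, ν)` of
`∫ |x − y| dγ(x, y)`. -/
noncomputable def W1 (μ ν : Measure ℝ) : ℝ :=
  sInf {r : ℝ | ∃ γ : Measure (ℝ × ℝ), IsCoupling γ μ ν ∧ r = ∫ p, |p.1 - p.2| ∂γ}

/-- The uniform probability measure on `[−2a, −a] ∪ [a, 2a]`. -/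
noncomputable def D₁ (a : ℝ) : Measure ℝ :=
  ENNReal.ofReal (1 / (2 * a)) •
    (volume.restrict (Set.Icc (-(2 * a)) (-a) ∪ Set.Icc a (2 * a)))

/-- The uniform probability measure on `[−x₀−b/2, −x₀+b/2] ∪ [x₀−b/2, x₀+b/2]`:
`(1/(2b))` times Lebesgue measure restricted to this set. -/
noncomputable def D₂ (x₀ b : ℝ) : Measure ℝ :=
  ENNReal.ofReal (1 / (2 * b)) •
    (volume.restrict
      (Set.Icc (-x₀ - b / 2) (-x₀ + b / 2) ∪ Set.Icc (x₀ - b / 2) (x₀ + b / 2)))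

lemma map_affine_Icc (m k p q u v : ℝ) (hm : 0 < m) (hu : m * p + k = u)
    (hv : m * q + k = v) :
    (volume.restrict (Set.Icc p q)).map (fun x : ℝ => m * x + k) =
      ENNReal.ofReal m⁻¹ • volume.restrict (Set.Icc u v) := by
  have hm' : m ≠ 0 := hm.ne'
  have hemb : MeasurableEmbedding (fun x : ℝ => m * x + k) :=
    ((Homeomorph.mulLeft₀ m hm').trans (Homeomorph.addRight k)).measurableEmbedding
  have hvol : volume.map (fun x : ℝ => m * x + k) = ENNReal.ofReal |m⁻¹| • volume := by
    have hcomp : (fun x : ℝ => m * x + k) = (fun x => x + k) ∘ (fun x => m * x) := rfl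
    rw [hcomp, ← Measure.map_map (measurable_add_const k) (measurable_const_mul m),
      Real.map_volume_mul_left hm', Measure.map_smul, map_add_right_eq_self _ k]
  have hpre : (fun x : ℝ => m * x + k) ⁻¹' Set.Icc u v = Set.Icc p q := by
    ext x
    simp only [Set.mem_preimage, Set.mem_Icc, ← hu, ← hv]
    constructor
    · rintro ⟨h1, h2⟩
      exact ⟨le_of_mul_le_mul_left (by linarith) hm, le_of_mul_le_mul_left (by linarith) hm⟩
    · rintro ⟨h1, h2⟩
      have g1 := mul_le_mul_of_nonneg_left h1 hm.le
      have g2 := mul_le_mul_of_nonneg_left h2 hm.le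
      exact ⟨by linarith, by linarith⟩
  rw [← hpre, ← hemb.restrict_map, hvol, Measure.restrict_smul,
    abs_of_pos (inv_pos.2 hm)]

theorem stmt_6 (a b x₀ : ℝ) (hb : 0 < b) (hab : b < a)
    (hx₀ : x₀ ∈ Set.Icc (a + b / 2) (2 * a - b / 2)) :
    W1 (D₁ a) (D₂ x₀ b) ≤ (3 / 2) * a - (1 / 2) * b := by
  obtain ⟨hx₀1, hx₀2⟩ := hx₀
  have ha : 0 < a := hb.trans hab
  -- the transport map
  set T : ℝ → ℝ := fun x =>
    if x < 0 then b / a * x + (3 * b / 2 - x₀) else b / a * x + (x₀ - 3 * b / 2) with hTdef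
  have hT : Measurable T :=
    Measurable.ite measurableSet_Iio ((measurable_id.const_mul _).add_const _)
      ((measurable_id.const_mul _).add_const _)
  have hmeas : Measurable fun x : ℝ => (x, T x) := measurable_id.prodMk hT
  have hdisj1 : Disjoint (Set.Icc (-(2 * a)) (-a)) (Set.Icc a (2 * a)) := by
    rw [Set.disjoint_left]; rintro x ⟨_, h2⟩ ⟨h3, _⟩; linarith
  have hdisj2 : Disjoint (Set.Icc (-x₀ - b / 2) (-x₀ + b / 2))
      (Set.Icc (x₀ - b / 2) (x₀ + b / 2)) := by
    rw [Set.disjoint_left]; rintro x ⟨_, h2⟩ ⟨h3, _⟩; linarith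
  have hba : 0 < b / a := div_pos hb ha
  -- D₁ is a probability measure
  have hD1 : IsProbabilityMeasure (D₁ a) := by
    constructor
    rw [D₁, Measure.smul_apply, Measure.restrict_apply MeasurableSet.univ, Set.univ_inter,
      measure_union hdisj1 measurableSet_Icc, Real.volume_Icc, Real.volume_Icc, smul_eq_mul,
      ← ENNReal.ofReal_add (by linarith) (by linarith), ← ENNReal.ofReal_mul (by positivity)]
    rw [show 1 / (2 * a) * (-a - -(2 * a) + (2 * a - a)) = 1 by field_simp; ring]
    exact ENNReal.ofReal_one
  -- the pushforward of D₁ under T is D₂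
  have key : (D₁ a).map T = D₂ x₀ b := by
    have hcong1 : T =ᵐ[volume.restrict (Set.Icc (-(2 * a)) (-a))]
        fun x => b / a * x + (3 * b / 2 - x₀) := by
      filter_upwards [self_mem_ae_restrict (measurableSet_Icc :
        MeasurableSet (Set.Icc (-(2 * a)) (-a)))] with x hx
      have hx0 : x < 0 := lt_of_le_of_lt hx.2 (by linarith)
      simp [hTdef, if_pos hx0]
    have hcong2 : T =ᵐ[volume.restrict (Set.Icc a (2 * a))]
        fun x => b / a * x + (x₀ - 3 * b / 2) := by
      filter_upwards [self_mem_ae_restrict (measurableSet_Icc :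
        MeasurableSet (Set.Icc a (2 * a)))] with x hx
      have hx0 : ¬ x < 0 := not_lt.2 (le_trans ha.le hx.1)
      simp [hTdef, if_neg hx0]
    have h1 : (volume.restrict (Set.Icc (-(2 * a)) (-a))).map T =
        ENNReal.ofReal (b / a)⁻¹ •
          volume.restrict (Set.Icc (-x₀ - b / 2) (-x₀ + b / 2)) := by
      rw [Measure.map_congr hcong1]
      exact map_affine_Icc (b / a) (3 * b / 2 - x₀) (-(2 * a)) (-a) _ _ hba
        (by field_simp; ring) (by field_simp; ring)
    have h2 : (volume.restrict (Set.Icc a (2 * a))).map T =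
        ENNReal.ofReal (b / a)⁻¹ •
          volume.restrict (Set.Icc (x₀ - b / 2) (x₀ + b / 2)) := by
      rw [Measure.map_congr hcong2]
      exact map_affine_Icc (b / a) (x₀ - 3 * b / 2) a (2 * a) _ _ hba
        (by field_simp; ring) (by field_simp; ring)
    rw [D₁, D₂, Measure.restrict_union hdisj1 measurableSet_Icc,
      Measure.restrict_union hdisj2 measurableSet_Icc, Measure.map_smul,
      Measure.map_add _ _ hT, h1, h2, smul_add, smul_smul, smul_smul,
      ← ENNReal.ofReal_mul (by positivity)]
    rw [show 1 / (2 * a) * (b / a)⁻¹ = 1 / (2 * b) by field_simp, smul_add]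
  -- the coupling
  set γ : Measure (ℝ × ℝ) := (D₁ a).map fun x => (x, T x) with hγdef
  have hγprob : IsProbabilityMeasure γ := Measure.isProbabilityMeasure_map hmeas.aemeasurable
  have hfst : γ.map Prod.fst = D₁ a := by
    rw [hγdef, Measure.map_map measurable_fst hmeas]
    exact Measure.map_id
  have hsnd : γ.map Prod.snd = D₂ x₀ b := by
    rw [hγdef, Measure.map_map measurable_snd hmeas]
    exact key
  have hcoup : IsCoupling γ (D₁ a) (D₂ x₀ b) := ⟨hγprob, hfst, hsnd⟩
  -- the cost bound
  have habs : ∀ᵐ x ∂(D₁ a), ‖|x - T x|‖ ≤ a - b := by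
    rw [D₁]
    refine Measure.ae_smul_measure ?_ _
    filter_upwards [self_mem_ae_restrict
      (((measurableSet_Icc).union measurableSet_Icc) :
        MeasurableSet (Set.Icc (-(2 * a)) (-a) ∪ Set.Icc a (2 * a)))] with x hx
    have hax : a * (b / a * x) = b * x := by field_simp
    have hx₀a1 : a * (a + b / 2) ≤ a * x₀ := mul_le_mul_of_nonneg_left hx₀1 ha.le
    have hx₀a2 : a * x₀ ≤ a * (2 * a - b / 2) := mul_le_mul_of_nonneg_left hx₀2 ha.le
    rw [Real.norm_eq_abs, abs_abs, abs_le]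
    rcases hx with hx | hx
    · obtain ⟨h1, h2⟩ := hx
      have hx0 : x < 0 := lt_of_le_of_lt h2 (by linarith)
      have hTx : T x = b / a * x + (3 * b / 2 - x₀) := if_pos hx0
      have g1 : (0:ℝ) ≤ (x + 2 * a) * (a - b) := mul_nonneg (by linarith) (by linarith)
      have g2 : (0:ℝ) ≤ (-a - x) * (a - b) := mul_nonneg (by linarith) (by linarith)
      have k1 : a * (-(a - b)) ≤ a * (x - T x) := by rw [hTx]; nlinarith [g1, hax, hx₀a1]
      have k2 : a * (x - T x) ≤ a * (a - b) := by rw [hTx]; nlinarith [g2, hax, hx₀a2]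
      exact ⟨le_of_mul_le_mul_left k1 ha, le_of_mul_le_mul_left k2 ha⟩
    · obtain ⟨h1, h2⟩ := hx
      have hx0 : ¬ x < 0 := not_lt.2 (le_trans ha.le h1)
      have hTx : T x = b / a * x + (x₀ - 3 * b / 2) := if_neg hx0
      have g1 : (0:ℝ) ≤ (x - a) * (a - b) := mul_nonneg (by linarith) (by linarith)
      have g2 : (0:ℝ) ≤ (2 * a - x) * (a - b) := mul_nonneg (by linarith) (by linarith)
      have k1 : a * (-(a - b)) ≤ a * (x - T x) := by rw [hTx]; nlinarith [g1, hax, hx₀a2]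
      have k2 : a * (x - T x) ≤ a * (a - b) := by rw [hTx]; nlinarith [g2, hax, hx₀a1]
      exact ⟨le_of_mul_le_mul_left k1 ha, le_of_mul_le_mul_left k2 ha⟩
  have hcost : (∫ p, |p.1 - p.2| ∂γ) ≤ (3 / 2) * a - (1 / 2) * b := by
    have hint : (∫ p, |p.1 - p.2| ∂γ) = ∫ x, |x - T x| ∂(D₁ a) := by
      rw [hγdef, integral_map hmeas.aemeasurable]
      exact (continuous_abs.comp (continuous_fst.sub continuous_snd)).aestronglyMeasurable
    have hnorm := norm_integral_le_of_norm_le_const (μ := D₁ a) habs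
    rw [probReal_univ, mul_one] at hnorm
    have hle : (∫ x, |x - T x| ∂(D₁ a)) ≤ a - b :=
      le_trans (le_abs_self _) hnorm
    rw [hint]; linarith
  -- conclude
  refine csInf_le_of_le ⟨0, ?_⟩ ⟨γ, hcoup, rfl⟩ hcost
  rintro r ⟨γ', _, rfl⟩
  exact integral_nonneg fun p => abs_nonneg _
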